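/- Let β ≥ 1, α < β + 1 with α ≠ 1, and λ ≠ 0. For x > 0, the function G(x) = (1/λ)·x^{1−α}/(1−α) + x^{β−α+1}/(β−α+1) · ∑_{n=0}^∞ [ ((1)_n (e)_n) / ((2)_n (e+1)_n) ] (λx^β)ⁿ/n!, where e = −α/β + 1/β + 1, satisfies G'(x) = e^{λx^β}/(λx^α). -/

import Mathlib

noncomputable def poch (a : ℝ) (n : ℕ) : ℝ := ∏ i ∈ Finset.range n, (a + (i : ℝ))

lemma poch_succ (a : ℝ) (n : ℕ) : poch a (n+1) = poch a n * (a + n) := by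
  simp [poch, Finset.prod_range_succ]

lemma poch_one (n : ℕ) : poch 1 n = n.factorial := by
  induction n with
  | zero => simp [poch]
  | succ n ih => rw [poch_succ, ih]; push_cast [Nat.factorial_succ]; ring

lemma poch_two (n : ℕ) : poch 2 n = (n+1).factorial := by
  induction n with
  | zero => simp [poch]
  | succ n ih => rw [poch_succ, ih]; push_cast [Nat.factorial_succ]; ring

lemma poch_shift (e : ℝ) (n : ℕ) : poch (e+1) n * e = poch e n * (e + n) := by
  induction n with
  | zero => simp [poch]
  | succ n ih =>
    rw [poch_succ, poch_succ]
    push_cast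
    linear_combination ih * (e + 1 + (n:ℝ))

lemma poch_pos {e : ℝ} (he : 0 < e) (n : ℕ) : 0 < poch e n := by
  induction n with
  | zero => simp [poch]
  | succ n ih => rw [poch_succ]; positivity

lemma term_eq (β α l e y : ℝ) (hβ0 : 0 < β) (hba : 0 < β - α + 1) (heβ : e * β = β - α + 1)
    (he0 : 0 < e) (hy : 0 < y) (n : ℕ) :
    y ^ (β - α + 1) / (β - α + 1) *
      (poch 1 n * poch e n / (poch 2 n * poch (e + 1) n) * (l * y ^ β) ^ n / (n.factorial : ℝ))
    = l ^ n * y ^ (((n:ℝ)+1)*β - α + 1) / ((((n:ℝ)+1)*β - α + 1) * ((n+1).factorial : ℝ)) := by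
  have hP := poch_pos he0 n
  have hQ : 0 < poch (e+1) n := poch_pos (by linarith) n
  have hshift := poch_shift e n
  have hen : (0:ℝ) < e + n := by positivity
  have hfn : (0:ℝ) < (n.factorial : ℝ) := by positivity
  have hfn1 : (0:ℝ) < ((n+1).factorial : ℝ) := by positivity
  have hd : ((n:ℝ)+1)*β - α + 1 = β*(e+(n:ℝ)) := by linear_combination -heβ
  have hexp : y ^ (((n:ℝ)+1)*β - α + 1) = y ^ (β-α+1) * (y ^ β)^n := by
    rw [show ((n:ℝ)+1)*β - α + 1 = (β-α+1) + β*(n:ℝ) by ring, Real.rpow_add hy,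
      Real.rpow_mul hy.le, Real.rpow_natCast]
  rw [poch_one, poch_two, hexp, mul_pow]
  rw [hd]
  field_simp
  linear_combination (-(β * l ^ n)) * hshift + (poch (e+1) n * l ^ n) * heβ

lemma exp_shift (t : ℝ) : ∑' n : ℕ, t ^ (n+1) / ((n+1).factorial : ℝ) = Real.exp t - 1 := by
  have hs : Summable (fun n : ℕ => t ^ n / (n.factorial : ℝ)) := Real.summable_pow_div_factorial t
  have h0 : Real.exp t = ∑' n : ℕ, t ^ n / (n.factorial : ℝ) := by
    rw [Real.exp_eq_exp_ℝ, NormedSpace.exp_eq_tsum_div]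
  rw [hs.tsum_eq_zero_add] at h0
  simp at h0
  linarith [h0]

lemma deriv_sum_part (β α l x : ℝ) (hβ1 : 1 ≤ β) (hba : 0 < β - α + 1) (hl : l ≠ 0)
    (hx : 0 < x) :
    HasDerivAt (fun y : ℝ => ∑' n : ℕ,
        l ^ n * y ^ (((n:ℝ)+1)*β - α + 1) / ((((n:ℝ)+1)*β - α + 1) * (((n+1).factorial : ℕ) : ℝ)))
      (x ^ (-α) / l * (Real.exp (l * x ^ β) - 1)) x := by
  have hβ0 : (0:ℝ) < β := by linarith
  set K0 : ℝ := (x/2) ^ (-α) + (x+1) ^ (-α) with hK0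
  set C : ℝ := |l| * (x+1) ^ β with hC
  have hx1 : (0:ℝ) < x + 1 := by linarith
  have hK0pos : 0 < K0 := by positivity
  have hCpos : 0 < C := by positivity
  set u : ℕ → ℝ := fun n => (K0 * (x+1)^β) * (C ^ n / (n.factorial : ℝ)) with hu_def
  have hu : Summable u := (Real.summable_pow_div_factorial C).mul_left _
  set t : Set ℝ := Set.Ioo (x/2) (x+1) with ht_def
  have hxt : x ∈ t := ⟨by linarith, by linarith⟩
  have hd_pos : ∀ n : ℕ, (0:ℝ) < ((n:ℝ)+1)*β - α + 1 := by
    intro n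
    have : (0:ℝ) ≤ (n:ℝ) * β := by positivity
    nlinarith
  -- pointwise bound on y ^ ((n+1)β - α) for y ∈ t
  have hbound : ∀ (n : ℕ) (y : ℝ), y ∈ t → y ^ (((n:ℝ)+1)*β - α) ≤ (x+1) ^ (β*((n:ℝ)+1)) * K0 := by
    intro n y hy
    have hy0 : 0 < y := lt_trans (by positivity) hy.1
    have h1 : y ^ (((n:ℝ)+1)*β - α) = y ^ (β*((n:ℝ)+1)) * y ^ (-α) := by
      rw [← Real.rpow_add hy0]; ring_nf
    rw [h1]
    have h2 : y ^ (β*((n:ℝ)+1)) ≤ (x+1) ^ (β*((n:ℝ)+1)) :=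
      Real.rpow_le_rpow hy0.le hy.2.le (by positivity)
    have h3 : y ^ (-α) ≤ K0 := by
      rcases le_or_gt 0 α with h | h
      · have := Real.rpow_le_rpow_of_nonpos (by positivity : (0:ℝ) < x/2) hy.1.le
          (by linarith : -α ≤ 0)
        exact le_trans this (le_add_of_nonneg_right (by positivity))
      · have := Real.rpow_le_rpow hy0.le hy.2.le (by linarith : 0 ≤ -α)
        exact le_trans this (le_add_of_nonneg_left (by positivity))
    exact mul_le_mul h2 h3 (by positivity) (by positivity)
  have hpow_split : ∀ n : ℕ, (x+1) ^ (β*((n:ℝ)+1)) = ((x+1)^β)^n * (x+1)^β := by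
    intro n
    rw [show β*((n:ℝ)+1) = β*(n:ℝ) + β by ring, Real.rpow_add hx1, Real.rpow_mul hx1.le,
      Real.rpow_natCast]
  have key := hasDerivAt_tsum_of_isPreconnected (F := ℝ)
    (u := u)
    (g := fun (n : ℕ) (y : ℝ) =>
      l ^ n * y ^ (((n:ℝ)+1)*β - α + 1) / ((((n:ℝ)+1)*β - α + 1) * (((n+1).factorial : ℕ) : ℝ)))
    (g' := fun (n : ℕ) (y : ℝ) => l ^ n * y ^ (((n:ℝ)+1)*β - α) / (((n+1).factorial : ℕ) : ℝ))
    hu isOpen_Ioo isPreconnected_Ioo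
    ?_ ?_ hxt ?_ hxt
  · refine key.congr_deriv (Eq.symm ?_)
    have hterm : ∀ n : ℕ, l ^ n * x ^ (((n:ℝ)+1)*β - α) / (((n+1).factorial : ℕ) : ℝ)
        = (x ^ (-α) / l) * ((l * x ^ β) ^ (n+1) / (((n+1).factorial : ℕ) : ℝ)) := by
      intro n
      have hxs : x ^ (((n:ℝ)+1)*β - α) = x ^ (-α) * (x ^ β) ^ (n+1) := by
        rw [show ((n:ℝ)+1)*β - α = -α + β*(((n+1 : ℕ)):ℝ) by push_cast; ring,
          Real.rpow_add hx, Real.rpow_mul hx.le, Real.rpow_natCast]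
      have hfn1 : (((n+1).factorial : ℕ) : ℝ) ≠ 0 := by positivity
      rw [hxs, mul_pow, pow_succ]
      field_simp
      ring
    calc x ^ (-α) / l * (Real.exp (l * x ^ β) - 1)
        = x ^ (-α) / l * ∑' n : ℕ, (l * x ^ β) ^ (n+1) / (((n+1).factorial : ℕ) : ℝ) := by
          rw [exp_shift]
      _ = ∑' n : ℕ, (x ^ (-α) / l) * ((l * x ^ β) ^ (n+1) / (((n+1).factorial : ℕ) : ℝ)) :=
          tsum_mul_left.symm
      _ = ∑' n : ℕ, l ^ n * x ^ (((n:ℝ)+1)*β - α) / (((n+1).factorial : ℕ) : ℝ) :=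
          tsum_congr fun n => (hterm n).symm
  · -- HasDerivAt for each term
    intro n y hy
    have hy0 : 0 < y := lt_trans (by positivity) hy.1
    have hfn1 : (0:ℝ) < (((n+1).factorial : ℕ) : ℝ) := by positivity
    show HasDerivAt (fun y : ℝ => l ^ n * y ^ (((n:ℝ)+1)*β - α + 1) /
        ((((n:ℝ)+1)*β - α + 1) * (((n+1).factorial : ℕ) : ℝ)))
      (l ^ n * y ^ (((n:ℝ)+1)*β - α) / (((n+1).factorial : ℕ) : ℝ)) y
    have h := (Real.hasDerivAt_rpow_const (x := y) (p := ((n:ℝ)+1)*β - α + 1)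
      (Or.inl hy0.ne')).const_mul (l ^ n / ((((n:ℝ)+1)*β - α + 1) * (((n+1).factorial : ℕ) : ℝ)))
    have hfun : (fun y : ℝ => l ^ n * y ^ (((n:ℝ)+1)*β - α + 1) /
        ((((n:ℝ)+1)*β - α + 1) * (((n+1).factorial : ℕ) : ℝ)))
        = fun y : ℝ => l ^ n / ((((n:ℝ)+1)*β - α + 1) * (((n+1).factorial : ℕ) : ℝ)) *
          y ^ (((n:ℝ)+1)*β - α + 1) := by
      funext z; ring
    rw [hfun]
    refine h.congr_deriv (Eq.symm ?_)
    rw [show ((n:ℝ)+1)*β - α + 1 - 1 = ((n:ℝ)+1)*β - α by ring]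
    have hdn : (((n:ℝ)+1)*β - α + 1) ≠ 0 := (hd_pos n).ne'
    field_simp
  · -- bound
    intro n y hy
    have hy0 : 0 < y := lt_trans (by positivity) hy.1
    have hfn1 : (0:ℝ) < (((n+1).factorial : ℕ) : ℝ) := by positivity
    have hnorm : ‖l ^ n * y ^ (((n:ℝ)+1)*β - α) / (((n+1).factorial : ℕ) : ℝ)‖
        = |l| ^ n * y ^ (((n:ℝ)+1)*β - α) / (((n+1).factorial : ℕ) : ℝ) := by
      rw [Real.norm_eq_abs, abs_div, abs_mul, abs_pow, abs_of_pos (Real.rpow_pos_of_pos hy0 _),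
        abs_of_pos hfn1]
    rw [hnorm, hu_def]
    calc |l| ^ n * y ^ (((n:ℝ)+1)*β - α) / (((n+1).factorial : ℕ) : ℝ)
        ≤ |l| ^ n * ((x+1) ^ (β*((n:ℝ)+1)) * K0) / ((n.factorial : ℕ) : ℝ) := by
          gcongr
          · exact hbound n y hy
          · exact Nat.le_succ n
      _ = (K0 * (x+1)^β) * (C ^ n / (n.factorial : ℝ)) := by
          rw [hpow_split, hC, mul_pow]; ring
  · -- summable at x
    apply Summable.of_norm_bounded
      (hu.mul_left (x / (β - α + 1)))
    intro n
    have hfn1 : (0:ℝ) < (((n+1).factorial : ℕ) : ℝ) := by positivity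
    have hxs : x ^ (((n:ℝ)+1)*β - α + 1) = x ^ (((n:ℝ)+1)*β - α) * x := by
      rw [← Real.rpow_add_one hx.ne']
    have hnorm : ‖l ^ n * x ^ (((n:ℝ)+1)*β - α + 1) /
        ((((n:ℝ)+1)*β - α + 1) * (((n+1).factorial : ℕ) : ℝ))‖
        = |l| ^ n * x ^ (((n:ℝ)+1)*β - α + 1) / ((((n:ℝ)+1)*β - α + 1) * (((n+1).factorial : ℕ) : ℝ)) := by
      rw [Real.norm_eq_abs, abs_div, abs_mul, abs_pow, abs_of_pos (Real.rpow_pos_of_pos hx _),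
        abs_of_pos (mul_pos (hd_pos n) hfn1)]
    rw [hnorm, hu_def, hxs]
    calc |l| ^ n * (x ^ (((n:ℝ)+1)*β - α) * x) / ((((n:ℝ)+1)*β - α + 1) * (((n+1).factorial : ℕ) : ℝ))
        ≤ |l| ^ n * (((x+1) ^ (β*((n:ℝ)+1)) * K0) * x) / ((β - α + 1) * ((n.factorial : ℕ) : ℝ)) := by
          gcongr
          · exact hbound n x hxt
          · exact (hd_pos n).le
          · nlinarith [Nat.cast_nonneg (α := ℝ) n]
          · exact Nat.le_succ n
      _ = (x / (β - α + 1)) * ((K0 * (x+1)^β) * (C ^ n / (n.factorial : ℝ))) := by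
          rw [hpow_split, hC, mul_pow]
          have h1 : (β - α + 1) ≠ 0 := hba.ne'
          have h2 : ((n.factorial:ℕ):ℝ) ≠ 0 := by positivity
          field_simp

theorem stmt_18 (β α l : ℝ) (hβ : 1 ≤ β) (hα : α < β + 1) (hα1 : α ≠ 1)
    (hl : l ≠ 0) (e : ℝ) (he : e = -α / β + 1 / β + 1) (x : ℝ) (hx : 0 < x) :
    HasDerivAt (fun y : ℝ => (1 / l) * y ^ (1 - α) / (1 - α) +
        y ^ (β - α + 1) / (β - α + 1) *
          ∑' n : ℕ, poch 1 n * poch e n / (poch 2 n * poch (e + 1) n) *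
            (l * y ^ β) ^ n / (n.factorial : ℝ))
      (Real.exp (l * x ^ β) / (l * x ^ α)) x := by
  have hβ0 : (0:ℝ) < β := by linarith
  have hba : (0:ℝ) < β - α + 1 := by linarith
  have heβ : e * β = β - α + 1 := by
    rw [he]; field_simp; ring
  have he0 : 0 < e := by nlinarith
  have h1a : (1:ℝ) - α ≠ 0 := sub_ne_zero.mpr (Ne.symm hα1)
  -- derivative of the first summand
  have h1 : HasDerivAt (fun y : ℝ => (1 / l) * y ^ (1 - α) / (1 - α)) ((1 / l) * x ^ (-α)) x := by
    have h := ((Real.hasDerivAt_rpow_const (x := x) (p := 1 - α)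
      (Or.inl hx.ne')).const_mul (1 / l)).div_const (1 - α)
    refine h.congr_deriv (Eq.symm ?_)
    rw [show (1:ℝ) - α - 1 = -α by ring]
    field_simp
  have h2 := deriv_sum_part β α l x hβ hba hl hx
  -- combined derivative with the target value
  have hH : HasDerivAt (fun y : ℝ => (1 / l) * y ^ (1 - α) / (1 - α) +
      ∑' n : ℕ, l ^ n * y ^ (((n:ℝ)+1)*β - α + 1) /
        ((((n:ℝ)+1)*β - α + 1) * ((n+1).factorial : ℝ)))
      (Real.exp (l * x ^ β) / (l * x ^ α)) x := by
    refine (h1.add h2).congr_deriv (Eq.symm ?_)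
    have hxa : x ^ α ≠ 0 := (Real.rpow_pos_of_pos hx α).ne'
    rw [Real.rpow_neg hx.le]
    field_simp
    ring
  refine hH.congr_of_eventuallyEq ?_
  filter_upwards [Ioi_mem_nhds hx] with y hy
  have hy0 : (0:ℝ) < y := hy
  congr 1
  rw [← tsum_mul_left]
  exact tsum_congr fun n => term_eq β α l e y hβ0 hba heβ he0 hy0 n
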